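/- For every real number α > 1 and every feasible distribution p for the symmetric TSC scheme, one has Σ_{m=1}^{N^K} p_m^α ≥ Σ_{m=1}^{N^K} (p*_m)^α; consequently p* minimizes the Rényi divergence of order α from the uniform distribution among all feasible distributions. -/

import Mathlib

open Finset Real

/-- Download cost of option `m` (0-indexed: options `1,…,N` of the paper are `m < N`)
in the symmetric TSC scheme with `N` databases and `K` messages. -/
noncomputable def tscCost (N m : ℕ) : ℝ := if m < N then (N : ℝ) - 1 else (N : ℝ)

/-- `p` is a feasible query distribution for the symmetric TSC scheme with expected
normalized download cost `D`. -/
def TSCFeasible (N K : ℕ) (D : ℝ) (p : ℕ → ℝ) : Prop :=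
  (∀ m ∈ Finset.range (N ^ K), 0 ≤ p m) ∧
  (∑ m ∈ Finset.range (N ^ K), p m = 1) ∧
  (1 / ((N : ℝ) - 1)) * (∑ m ∈ Finset.range (N ^ K), p m * tscCost N m) = D

/-- The optimal distribution `p*` for the symmetric TSC scheme. -/
noncomputable def tscOpt (N K : ℕ) (D : ℝ) (m : ℕ) : ℝ :=
  if m < N then (1 - ((N : ℝ) - 1) * (D - 1)) / N
  else ((N : ℝ) - 1) * (D - 1) / ((N : ℝ) ^ K - (N : ℝ))

/-- Download cost of option `m` (0-indexed) in the alternative PIR scheme with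
message length `L`. -/
noncomputable def altCost (N L m : ℕ) : ℝ := if m < N then (L : ℝ) else (L : ℝ) + 1

/-- `p` is a feasible query distribution for the alternative PIR scheme
(`M = N (L+1)^(K-1)` options) with expected normalized download cost `D`. -/
def AltFeasible (N K L : ℕ) (D : ℝ) (p : ℕ → ℝ) : Prop :=
  (∀ m ∈ Finset.range (N * (L + 1) ^ (K - 1)), 0 ≤ p m) ∧
  (∑ m ∈ Finset.range (N * (L + 1) ^ (K - 1)), p m = 1) ∧
  (1 / (L : ℝ)) * (∑ m ∈ Finset.range (N * (L + 1) ^ (K - 1)), p m * altCost N L m) = D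

/-- The optimal distribution `q*` for the alternative PIR scheme. -/
noncomputable def altOpt (N K L : ℕ) (D : ℝ) (m : ℕ) : ℝ :=
  if m < N then (1 - (L : ℝ) * (D - 1)) / N
  else (L : ℝ) * (D - 1) / ((N : ℝ) * ((L : ℝ) + 1) ^ (K - 1) - (N : ℝ))

/-- Rényi divergence of order `α` (`0 < α`, `α ≠ 1`) of a distribution `p` on `M`
options from the uniform distribution on those options (natural logarithm). -/
noncomputable def renyiDiv (M : ℕ) (α : ℝ) (p : ℕ → ℝ) : ℝ :=
  (1 / (α - 1)) * Real.log ((M : ℝ) ^ (α - 1) * ∑ m ∈ Finset.range M, p m ^ α)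

/-- Kullback–Leibler divergence of a distribution `p` on `M` options from the uniform
distribution on those options (natural logarithm, with `0 · log 0 = 0`). -/
noncomputable def klDivUnif (M : ℕ) (p : ℕ → ℝ) : ℝ :=
  ∑ m ∈ Finset.range M, p m * Real.log ((M : ℝ) * p m)

/-- The maximum of `p` over the `M` options. -/
noncomputable def maxOver (M : ℕ) (hM : M ≠ 0) (p : ℕ → ℝ) : ℝ :=
  (Finset.range M).sup' (Finset.nonempty_range_iff.mpr hM) p


private lemma jensen_rpow (s : Finset ℕ) (f : ℕ → ℝ) (hf : ∀ i ∈ s, 0 ≤ f i)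
    {α : ℝ} (hα : 1 ≤ α) (hs : s.Nonempty) :
    (s.card : ℝ) * ((∑ i ∈ s, f i) / s.card) ^ α ≤ ∑ i ∈ s, f i ^ α := by
  have hc : (0:ℝ) < s.card := by exact_mod_cast hs.card_pos
  have h := Real.rpow_arith_mean_le_arith_mean_rpow s (fun _ => ((s.card : ℝ))⁻¹) f
    (fun i _ => by positivity)
    (by rw [Finset.sum_const, nsmul_eq_mul]; field_simp) hf hα
  rw [← Finset.mul_sum, ← Finset.mul_sum] at h
  have h2 := mul_le_mul_of_nonneg_left h hc.le
  rw [mul_inv_cancel_left₀ (ne_of_gt hc)] at h2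
  calc (s.card : ℝ) * ((∑ i ∈ s, f i) / s.card) ^ α
      = (s.card : ℝ) * ((s.card : ℝ)⁻¹ * ∑ i ∈ s, f i) ^ α := by
        rw [div_eq_inv_mul]
    _ ≤ ∑ i ∈ s, f i ^ α := h2

/-- for `α > 1`, every feasible `p` for the symmetric TSC scheme satisfies
`∑ p*ₘ^α ≤ ∑ pₘ^α`; consequently `p*` minimizes the order-`α` Rényi divergence from
uniform among feasible distributions. -/
theorem tsc_renyi_min_gt_one (N K : ℕ) (hN : 2 ≤ N) (hK : 2 ≤ K) (D : ℝ)
    (hD1 : 1 ≤ D) (hD2 : D ≤ ∑ k ∈ Finset.range K, ((N : ℝ) ^ k)⁻¹)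
    (α : ℝ) (hα : 1 < α)
    (p : ℕ → ℝ) (hp : TSCFeasible N K D p) :
    (∑ m ∈ Finset.range (N ^ K), tscOpt N K D m ^ α) ≤
      (∑ m ∈ Finset.range (N ^ K), p m ^ α) ∧
    renyiDiv (N ^ K) α (tscOpt N K D) ≤ renyiDiv (N ^ K) α p := by
  obtain ⟨hpos, hsum, hcost⟩ := hp
  have hN0 : (0:ℝ) < N := by positivity
  have hN1 : (1:ℝ) < N := by exact_mod_cast hN
  have hNM : N < N ^ K := by
    calc N = N ^ 1 := (pow_one N).symm
    _ < N ^ K := Nat.pow_lt_pow_right hN (by omega)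
  have hMR : (N:ℝ) < (N:ℝ) ^ K := by exact_mod_cast hNM
  -- split sums
  have hsplit : ∀ g : ℕ → ℝ, ∑ m ∈ Finset.range (N ^ K), g m
      = (∑ m ∈ Finset.range N, g m) + ∑ m ∈ Finset.Ico N (N ^ K), g m := by
    intro g
    rw [Finset.range_eq_Ico, Finset.range_eq_Ico]
    exact (Finset.sum_Ico_consecutive g (Nat.zero_le N) hNM.le).symm
  set A := ∑ m ∈ Finset.range N, p m with hAdef
  set B := ∑ m ∈ Finset.Ico N (N ^ K), p m with hBdef
  have hAB : A + B = 1 := by rw [hsplit] at hsum; linarith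
  -- cost sum
  have hcost1 : ∑ m ∈ Finset.range N, p m * tscCost N m = ((N:ℝ) - 1) * A := by
    rw [hAdef, Finset.mul_sum]
    refine Finset.sum_congr rfl fun m hm => ?_
    rw [tscCost, if_pos (Finset.mem_range.mp hm)]; ring
  have hcost2 : ∑ m ∈ Finset.Ico N (N ^ K), p m * tscCost N m = (N:ℝ) * B := by
    rw [hBdef, Finset.mul_sum]
    refine Finset.sum_congr rfl fun m hm => ?_
    rw [tscCost, if_neg (by simpa using (Finset.mem_Ico.mp hm).1.not_gt)]; ring
  have hN1' : (N:ℝ) - 1 ≠ 0 := by linarith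
  have hcost' : ((N:ℝ) - 1) * A + (N:ℝ) * B = ((N:ℝ) - 1) * D := by
    rw [hsplit, hcost1, hcost2] at hcost
    field_simp at hcost; linarith
  have hBval : B = ((N:ℝ) - 1) * (D - 1) := by nlinarith [hcost', hAB]
  have hAval : A = 1 - ((N:ℝ) - 1) * (D - 1) := by linarith
  have hA0 : 0 ≤ A := Finset.sum_nonneg fun m hm =>
    hpos m (Finset.mem_range.mpr (lt_of_lt_of_le (Finset.mem_range.mp hm) hNM.le))
  have hB0 : 0 ≤ B := Finset.sum_nonneg fun m hm =>
    hpos m (Finset.mem_range.mpr (Finset.mem_Ico.mp hm).2)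
  have hcard2 : ((Finset.Ico N (N ^ K)).card : ℝ) = (N:ℝ) ^ K - (N:ℝ) := by
    rw [Nat.card_Ico]; push_cast [Nat.cast_sub hNM.le]; ring
  have hMN : (0:ℝ) < (N:ℝ) ^ K - (N:ℝ) := by linarith
  -- opt sums
  have hopt1 : ∑ m ∈ Finset.range N, tscOpt N K D m ^ α = (N:ℝ) * (A / N) ^ α := by
    rw [Finset.sum_congr rfl fun m hm => by
      rw [tscOpt, if_pos (Finset.mem_range.mp hm), ← hAval],
      Finset.sum_const, Finset.card_range, nsmul_eq_mul]
  have hopt2 : ∑ m ∈ Finset.Ico N (N ^ K), tscOpt N K D m ^ α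
      = ((N:ℝ) ^ K - (N:ℝ)) * (B / ((N:ℝ) ^ K - (N:ℝ))) ^ α := by
    rw [Finset.sum_congr rfl fun m hm => by
      rw [tscOpt, if_neg (by simpa using (Finset.mem_Ico.mp hm).1.not_gt), ← hBval],
      Finset.sum_const, nsmul_eq_mul, hcard2]
  have hne1 : (Finset.range N).Nonempty := Finset.nonempty_range_iff.mpr (by omega)
  have hne2 : (Finset.Ico N (N ^ K)).Nonempty := Finset.nonempty_Ico.mpr hNM
  have hj1 := jensen_rpow (Finset.range N) p
    (fun m hm => hpos m (Finset.mem_range.mpr (lt_of_lt_of_le (Finset.mem_range.mp hm) hNM.le)))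
    hα.le hne1
  have hj2 := jensen_rpow (Finset.Ico N (N ^ K)) p
    (fun m hm => hpos m (Finset.mem_range.mpr (Finset.mem_Ico.mp hm).2)) hα.le hne2
  rw [Finset.card_range] at hj1
  rw [hcard2] at hj2
  have hmain : (∑ m ∈ Finset.range (N ^ K), tscOpt N K D m ^ α) ≤
      ∑ m ∈ Finset.range (N ^ K), p m ^ α := by
    rw [hsplit, hsplit, hopt1, hopt2]
    exact add_le_add hj1 hj2
  refine ⟨hmain, ?_⟩
  -- positivity of the optimal sum
  have hoptpos : 0 < ∑ m ∈ Finset.range (N ^ K), tscOpt N K D m ^ α := by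
    rw [hsplit, hopt1, hopt2]
    rcases lt_or_ge 0 A with hA | hA
    · have h1 : 0 < (N:ℝ) * (A / N) ^ α :=
        mul_pos hN0 (Real.rpow_pos_of_pos (div_pos hA hN0) α)
      have h2 : 0 ≤ ((N:ℝ) ^ K - (N:ℝ)) * (B / ((N:ℝ) ^ K - (N:ℝ))) ^ α :=
        mul_nonneg hMN.le (Real.rpow_nonneg (div_nonneg hB0 hMN.le) α)
      linarith
    · have hB : 0 < B := by linarith
      have h2 : 0 < ((N:ℝ) ^ K - (N:ℝ)) * (B / ((N:ℝ) ^ K - (N:ℝ))) ^ α :=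
        mul_pos hMN (Real.rpow_pos_of_pos (div_pos hB hMN) α)
      have h1 : 0 ≤ (N:ℝ) * (A / N) ^ α :=
        mul_nonneg hN0.le (Real.rpow_nonneg (div_nonneg hA0 hN0.le) α)
      linarith
  have hMpos : (0:ℝ) < ((N ^ K : ℕ) : ℝ) ^ (α - 1) :=
    Real.rpow_pos_of_pos (by exact_mod_cast Nat.lt_of_le_of_lt (Nat.zero_le N) hNM) _
  rw [renyiDiv, renyiDiv]
  have h1α : 0 < 1 / (α - 1) := div_pos one_pos (by linarith)
  apply mul_le_mul_of_nonneg_left _ h1α.le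
  apply Real.log_le_log (mul_pos hMpos hoptpos)
  exact mul_le_mul_of_nonneg_left hmain hMpos.le
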